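/- Let λ₄, λ₆ ∈ ℂ and let U : ℝ → ℂ be a six-times differentiable function satisfying the fourth-order equation U'''' = 10UU'' + 5(U')² − 10U³ − 8λ₄U + 16λ₆. Then U satisfies the parameter-free sixth-order nonlinear differential equation U'·U'''''' − U''·U''''' − 10UU'U'''' + 10(UU'' − 3(U')²)·U''' + 60U(U')³ = 0. -/

import Mathlib

/-- If a six-times differentiable `U : ℝ → ℂ` satisfies
`U'''' = 10UU'' + 5(U')² − 10U³ − 8λ₄U + 16λ₆`, then it satisfies the parameter-free
sixth-order equation
`U'U'''''' − U''U''''' − 10UU'U'''' + 10(UU'' − 3(U')²)U''' + 60U(U')³ = 0`. -/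
theorem sixth_order_equation (lam4 lam6 : ℂ) (U : ℝ → ℂ)
    (hU : ContDiff ℝ 6 U)
    (h : ∀ t, iteratedDeriv 4 U t = 10 * U t * iteratedDeriv 2 U t
      + 5 * (deriv U t) ^ 2 - 10 * (U t) ^ 3 - 8 * lam4 * U t + 16 * lam6) :
    ∀ t, deriv U t * iteratedDeriv 6 U t - iteratedDeriv 2 U t * iteratedDeriv 5 U t
      - 10 * U t * deriv U t * iteratedDeriv 4 U t
      + 10 * (U t * iteratedDeriv 2 U t - 3 * (deriv U t) ^ 2) * iteratedDeriv 3 U t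
      + 60 * U t * (deriv U t) ^ 3 = 0 := by
  have hd : ∀ (k : ℕ), k < 6 → ∀ t,
      HasDerivAt (iteratedDeriv k U) (iteratedDeriv (k + 1) U t) t := by
    intro k hk t
    have := (hU.differentiable_iteratedDeriv k (by exact_mod_cast hk)) t
    rw [iteratedDeriv_succ]
    exact this.hasDerivAt
  have h' : ∀ t, iteratedDeriv 4 U t = 10 * U t * iteratedDeriv 2 U t
      + 5 * (iteratedDeriv 1 U t) ^ 2 - 10 * (U t) ^ 3 - 8 * lam4 * U t + 16 * lam6 := by
    intro t; rw [iteratedDeriv_one]; exact h t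
  have h0 : ∀ t, HasDerivAt U (iteratedDeriv 1 U t) t := by
    intro t
    have := hd 0 (by norm_num) t
    rwa [iteratedDeriv_zero] at this
  have h5 : ∀ t, iteratedDeriv 5 U t =
      20 * iteratedDeriv 1 U t * iteratedDeriv 2 U t + 10 * U t * iteratedDeriv 3 U t
      - 30 * (U t) ^ 2 * iteratedDeriv 1 U t - 8 * lam4 * iteratedDeriv 1 U t := by
    intro t
    have h1 : HasDerivAt (iteratedDeriv 1 U) (iteratedDeriv 2 U t) t := hd 1 (by norm_num) t
    have h2 : HasDerivAt (iteratedDeriv 2 U) (iteratedDeriv 3 U t) t := hd 2 (by norm_num) t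
    have h4 : HasDerivAt (iteratedDeriv 4 U) (iteratedDeriv 5 U t) t := hd 4 (by norm_num) t
    have A := ((h0 t).const_mul (10 : ℂ)).mul h2
    have B := (h1.mul h1).const_mul (5 : ℂ)
    have C := (((h0 t).mul (h0 t)).mul (h0 t)).const_mul (10 : ℂ)
    have D := (h0 t).const_mul (8 * lam4)
    have rhs := (((A.add B).sub C).sub D).add_const (16 * lam6)
    have hfun : (fun y => 10 * U y * iteratedDeriv 2 U y
        + 5 * (iteratedDeriv 1 U y * iteratedDeriv 1 U y)
        - 10 * (U y * U y * U y) - 8 * lam4 * U y + 16 * lam6)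
        = iteratedDeriv 4 U := by
      funext s; rw [h' s]; ring
    rw [← hfun] at h4
    rw [h4.unique rhs]; simp only [Pi.mul_apply]; ring
  have h6 : ∀ t, iteratedDeriv 6 U t =
      30 * iteratedDeriv 1 U t * iteratedDeriv 3 U t
      + 20 * iteratedDeriv 2 U t * iteratedDeriv 2 U t + 10 * U t * iteratedDeriv 4 U t
      - 60 * U t * iteratedDeriv 1 U t * iteratedDeriv 1 U t
      - 30 * (U t) ^ 2 * iteratedDeriv 2 U t - 8 * lam4 * iteratedDeriv 2 U t := by
    intro t
    have h1 : HasDerivAt (iteratedDeriv 1 U) (iteratedDeriv 2 U t) t := hd 1 (by norm_num) t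
    have h2 : HasDerivAt (iteratedDeriv 2 U) (iteratedDeriv 3 U t) t := hd 2 (by norm_num) t
    have h3 : HasDerivAt (iteratedDeriv 3 U) (iteratedDeriv 4 U t) t := hd 3 (by norm_num) t
    have h5' : HasDerivAt (iteratedDeriv 5 U) (iteratedDeriv 6 U t) t := hd 5 (by norm_num) t
    have A := (h1.const_mul (20 : ℂ)).mul h2
    have B := ((h0 t).const_mul (10 : ℂ)).mul h3
    have C := (((h0 t).mul (h0 t)).const_mul (30 : ℂ)).mul h1
    have D := h1.const_mul (8 * lam4)
    have rhs := ((A.add B).sub C).sub D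
    have hfun : (fun y => 20 * iteratedDeriv 1 U y * iteratedDeriv 2 U y
        + 10 * U y * iteratedDeriv 3 U y
        - 30 * (U y * U y) * iteratedDeriv 1 U y - 8 * lam4 * iteratedDeriv 1 U y)
        = iteratedDeriv 5 U := by
      funext s; rw [h5 s]; ring
    rw [← hfun] at h5'
    rw [h5'.unique rhs]; simp only [Pi.mul_apply]; ring
  intro t
  rw [show deriv U t = iteratedDeriv 1 U t from by rw [iteratedDeriv_one],
    h6 t, h5 t, h' t]
  ring
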